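/- In an OKCP instance with K−1 previously established connections, after assigning to E_2 all free links lying outside the connected component of s in (V, E_1), the number of connected components of the graph (V, E_2 together with these reassigned links) that are accessible to the backup path is at most K−1, since each such component must contain at least one of the K−1 previous backup paths and each backup path is connected, hence lies in a single component. -/
import Mathlib


/-- In an OKCP instance with `K - 1 = k` previously established connections,
let `E₂` be the union of the edge sets of the `k` (connected) backup paths, and
reassign to the backup side the free links `F ⊆ E₁` lying outside the connected
component of `s` in `(V, E₁)`. Then the number of connected components of the
graph `(V, E₂ ∪ F)` that are accessible to the backup path — i.e. nontrivial
components having a node in common with the component of `s` in `(V, E₁)` — is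
at most `k`, since each such component contains at least one of the `k` backup
paths and each backup path, being connected, lies in a single component. -/
theorem stmt_10 {V : Type*} [Fintype V] (G : SimpleGraph V)
    (E₁ : Set (Sym2 V)) (hE₁ : E₁ ⊆ G.edgeSet)
    (k : ℕ) (u v : Fin k → V) (b : ∀ i, G.Walk (u i) (v i))
    (E₂ : Set (Sym2 V)) (hE₂ : E₂ = ⋃ i, {e : Sym2 V | e ∈ (b i).edges})
    (h12 : Disjoint E₁ E₂)
    (s : V)
    (F : Set (Sym2 V))
    (hF : F = {e ∈ E₁ | ∀ x ∈ e, ¬ (SimpleGraph.fromEdgeSet E₁).Reachable s x}) :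
    Set.ncard {C : (SimpleGraph.fromEdgeSet (E₂ ∪ F)).ConnectedComponent |
        (∃ x y : V, (SimpleGraph.fromEdgeSet (E₂ ∪ F)).Adj x y ∧
          (SimpleGraph.fromEdgeSet (E₂ ∪ F)).connectedComponentMk x = C) ∧
        (∃ x : V, (SimpleGraph.fromEdgeSet (E₂ ∪ F)).connectedComponentMk x = C ∧
          (SimpleGraph.fromEdgeSet E₁).Reachable s x)} ≤ k := by
  classical
  set H := SimpleGraph.fromEdgeSet (E₂ ∪ F) with hH
  set S := {C : H.ConnectedComponent |
      (∃ x y : V, H.Adj x y ∧ H.connectedComponentMk x = C) ∧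
      (∃ x : V, H.connectedComponentMk x = C ∧
        (SimpleGraph.fromEdgeSet E₁).Reachable s x)} with hS
  have key : ∀ C ∈ S, ∃ i : Fin k, H.connectedComponentMk (u i) = C := by
    rintro C ⟨⟨x, y, hxy, hx⟩, z, hzC, hsz⟩
    have hrzx : H.Reachable z x :=
      SimpleGraph.ConnectedComponent.eq.mp (hzC.trans hx.symm)
    obtain ⟨w, hzw⟩ : ∃ w, H.Adj z w := by
      obtain ⟨p⟩ := hrzx
      cases p with
      | nil => exact ⟨y, hxy⟩
      | cons h _ => exact ⟨_, h⟩
    have hmem : s(z, w) ∈ E₂ ∪ F := ((SimpleGraph.fromEdgeSet_adj _).mp hzw).1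
    cases hmem with
    | inr hf =>
        rw [hF] at hf
        exact absurd hsz (hf.2 z (by simp))
    | inl h2 =>
        rw [hE₂] at h2
        simp only [Set.mem_iUnion, Set.mem_setOf_eq] at h2
        obtain ⟨i, hi⟩ := h2
        refine ⟨i, ?_⟩
        have hsub : ∀ e ∈ (b i).edges, e ∈ H.edgeSet := by
          intro e he
          rw [hH, SimpleGraph.edgeSet_fromEdgeSet]
          refine ⟨Or.inl ?_, G.not_isDiag_of_mem_edgeSet ((b i).edges_subset_edgeSet he)⟩
          rw [hE₂]; exact Set.mem_iUnion.2 ⟨i, he⟩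
        have hzsup : z ∈ ((b i).transfer H hsub).support := by
          rw [SimpleGraph.Walk.support_transfer]
          exact SimpleGraph.Walk.fst_mem_support_of_mem_edges _ hi
        have hr : H.Reachable (u i) z := ⟨((b i).transfer H hsub).takeUntil z hzsup⟩
        rw [← hzC]
        exact SimpleGraph.ConnectedComponent.sound hr
  choose f hf' using key
  have hinj : Function.Injective (fun C : S => f C C.2) := by
    intro C1 C2 h
    exact Subtype.ext ((hf' C1 C1.2).symm.trans (by rw [show f C1 C1.2 = f C2 C2.2 from h]; exact hf' C2 C2.2))
  have hcard := Nat.card_le_card_of_injective _ hinj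
  rw [← Nat.card_coe_set_eq]
  simpa using hcard
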